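/- Let α = 11 + √120 (so α + α⁻¹ = 22, with α·α⁻¹ = 1). Then for every positive integer m, 22^m·((481/482)^m + (1/483)^m) < α^m + α^(−m) < 22^m·((482/483)^m + (1/482)^m). -/

import Mathlib

/-- With `α = 11 + √120`, for every positive integer `m`,
`22^m((481/482)^m + (1/483)^m) < α^m + α^{-m} < 22^m((482/483)^m + (1/482)^m)`. -/
theorem stmt_2 (α : ℝ) (hα : α = 11 + Real.sqrt 120) (m : ℕ) (hm : 0 < m) :
    (22 : ℝ) ^ m * ((481 / 482 : ℝ) ^ m + (1 / 483 : ℝ) ^ m) < α ^ m + α⁻¹ ^ m ∧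
      α ^ m + α⁻¹ ^ m < (22 : ℝ) ^ m * ((482 / 483 : ℝ) ^ m + (1 / 482 : ℝ) ^ m) := by
  set s := Real.sqrt 120 with hs
  have hs0 : 0 ≤ s := Real.sqrt_nonneg 120
  have hs2 : s ^ 2 = 120 := Real.sq_sqrt (by norm_num)
  have h1 : (2640 / 241 : ℝ) < s := by nlinarith
  have h2 : s < 5291 / 483 := by nlinarith
  have hinv : α⁻¹ = 11 - s := by
    have hmul : α * (11 - s) = 1 := by rw [hα]; nlinarith
    field_simp [hα] at hmul ⊢
    rw [div_eq_iff (by rw [hα]; positivity)]; linarith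
  have hm' : m ≠ 0 := hm.ne'
  have key : ∀ x : ℝ, (22:ℝ)^m * x^m = (22*x)^m := fun x => (mul_pow 22 x m).symm
  simp only [mul_add, key, hinv]
  constructor
  · have l1 : (22 * (481/482) : ℝ) ^ m < α ^ m := by
      apply pow_lt_pow_left₀ _ (by norm_num) hm'
      rw [hα]; nlinarith
    have l2 : (22 * (1/483) : ℝ) ^ m < (11 - s) ^ m := by
      apply pow_lt_pow_left₀ _ (by norm_num) hm'
      nlinarith
    linarith
  · have l1 : α ^ m < (22 * (482/483) : ℝ) ^ m := by
      apply pow_lt_pow_left₀ _ (by rw [hα]; nlinarith) hm'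
      rw [hα]; nlinarith
    have l2 : (11 - s) ^ m < (22 * (1/482) : ℝ) ^ m := by
      apply pow_lt_pow_left₀ _ (by nlinarith) hm'
      nlinarith
    linarith
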